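/- Let b : ℕ → [0,∞) be a multiplicative function with b(p^v) ≤ B for all prime powers p^v, where B = (k−1)²·2^C for constants k ≥ 2 and C > 0 such that b(p) ≤ (k−1)²(1 + 1/(p−1))^C for all primes p. Then Σ_{q=1}^{Q} b(q)/q ≪_{k,C} (log Q)^{(k−1)²}. -/

import Mathlib

open Finset ArithmeticFunction
open scoped ArithmeticFunction.zeta

noncomputable def epsP (C : ℝ) (p : ℕ) : ℝ := (1 + 1/((p:ℝ)-1))^C - 1

lemma epsP_nonneg {C : ℝ} (hC : 0 ≤ C) {p : ℕ} (hp : 2 ≤ p) : 0 ≤ epsP C p := by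
  have h1 : (1:ℝ) ≤ (p:ℝ) - 1 := by
    have : (2:ℝ) ≤ (p:ℝ) := by exact_mod_cast hp
    linarith
  have : (1:ℝ) ≤ (1 + 1/((p:ℝ)-1)) ^ C := by
    apply Real.one_le_rpow _ hC
    have : 0 < 1/((p:ℝ)-1) := by positivity
    linarith
  simpa [epsP] using this

noncomputable def hFun (a : ℕ) (C : ℝ) : ArithmeticFunction ℝ :=
  ⟨fun n => if n = 0 then 0 else ∏ p ∈ n.primeFactors, ((a:ℝ) * epsP C p), by simp⟩

lemma hFun_apply {a : ℕ} {C : ℝ} {n : ℕ} (hn : n ≠ 0) :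
    hFun a C n = ∏ p ∈ n.primeFactors, ((a:ℝ) * epsP C p) := by
  simp [hFun, hn]

lemma hFun_nonneg {a : ℕ} {C : ℝ} (hC : 0 ≤ C) (n : ℕ) : 0 ≤ hFun a C n := by
  rcases eq_or_ne n 0 with rfl | hn
  · simp [hFun]
  · rw [hFun_apply hn]
    apply Finset.prod_nonneg
    intro p hp
    have hp2 : 2 ≤ p := (Nat.prime_of_mem_primeFactors hp).two_le
    have := epsP_nonneg hC hp2
    positivity

lemma hFun_isMult {a : ℕ} {C : ℝ} : (hFun a C).IsMultiplicative := by
  rw [ArithmeticFunction.IsMultiplicative.iff_ne_zero]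
  constructor
  · simp [hFun]
  · intro m n hm hn hmn
    rw [hFun_apply (Nat.mul_ne_zero hm hn), hFun_apply hm, hFun_apply hn,
      Nat.Coprime.primeFactors_mul hmn,
      Finset.prod_union (Nat.Coprime.disjoint_primeFactors hmn)]

lemma hFun_prime_pow {a : ℕ} {C : ℝ} {p v : ℕ} (hp : p.Prime) (hv : 1 ≤ v) :
    hFun a C (p ^ v) = (a:ℝ) * epsP C p := by
  rw [hFun_apply (pow_ne_zero _ hp.ne_zero), Nat.primeFactors_prime_pow (by omega) hp]
  simp

noncomputable def Zf (a : ℕ) : ArithmeticFunction ℝ := (ζ : ArithmeticFunction ℕ) ^ a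

lemma Zf_def (a : ℕ) : Zf a = (ζ : ArithmeticFunction ℕ) ^ a := rfl

lemma Zf_isMult (a : ℕ) : (Zf a).IsMultiplicative := by
  induction a with
  | zero => simpa [Zf] using ArithmeticFunction.isMultiplicative_one
  | succ a ih =>
      rw [Zf, pow_succ]
      exact ArithmeticFunction.IsMultiplicative.mul ih isMultiplicative_zeta.natCast

lemma Zf_nonneg (a : ℕ) (n : ℕ) : 0 ≤ Zf a n := by
  induction a generalizing n with
  | zero =>
      simp only [Zf, pow_zero]
      rcases eq_or_ne n 1 with rfl | hn
      · simp
      · simp [ArithmeticFunction.one_apply, hn]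
  | succ a ih =>
      rw [Zf, pow_succ, ArithmeticFunction.mul_apply]
      apply Finset.sum_nonneg
      rintro ⟨d, m⟩ hdm
      apply mul_nonneg (ih d)
      rw [ArithmeticFunction.natCoe_apply]
      positivity

lemma Zf_one (a : ℕ) : Zf a 1 = 1 := (Zf_isMult a).1

lemma Zf_ge_prime_pow {a : ℕ} (ha : 1 ≤ a) {p v : ℕ} (hp : p.Prime) (hv : 1 ≤ v) :
    (a : ℝ) ≤ Zf a (p ^ v) := by
  induction a with
  | zero => omega
  | succ a ih =>
      rcases Nat.eq_zero_or_pos a with rfl | ha'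
      · -- a = 0 : Zf 1 (p^v) = ζ (p^v) = 1
        have : Zf 1 (p ^ v) = 1 := by
          simp [Zf, ArithmeticFunction.natCoe_apply,
            ArithmeticFunction.zeta_apply, pow_ne_zero v hp.ne_zero, hp.ne_zero]
        rw [this]; norm_num
      · have hpv1 : p ^ v ≠ 1 := by
          have := hp.one_lt
          exact Nat.ne_of_gt (Nat.one_lt_pow (by omega) (by omega))
        have hkey : (1, p ^ v) ∈ (p ^ v).divisorsAntidiagonal ∧
            (p ^ v, 1) ∈ (p ^ v).divisorsAntidiagonal := by
          constructor <;> simp [Nat.mem_divisorsAntidiagonal, pow_ne_zero v hp.ne_zero, hp.ne_zero]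
        have hsub : ({(1, p ^ v), (p ^ v, 1)} : Finset (ℕ × ℕ)) ⊆
            (p ^ v).divisorsAntidiagonal := by
          intro x hx
          simp only [Finset.mem_insert, Finset.mem_singleton] at hx
          rcases hx with rfl | rfl
          · exact hkey.1
          · exact hkey.2
        have hne : ((1, p ^ v) : ℕ × ℕ) ≠ (p ^ v, 1) := by
          intro h
          have := (Prod.ext_iff.mp h).1
          exact hpv1 this.symm
        have hstep : Zf (a + 1) (p ^ v) = ∑ x ∈ (p ^ v).divisorsAntidiagonal,
            Zf a x.1 * ((ζ : ArithmeticFunction ℝ) x.2) := by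
          rw [Zf, pow_succ, ArithmeticFunction.mul_apply]
          rfl
        have hnn : ∀ x ∈ (p ^ v).divisorsAntidiagonal,
            0 ≤ Zf a x.1 * ((ζ : ArithmeticFunction ℝ) x.2) := by
          rintro ⟨d, m⟩ hdm
          apply mul_nonneg (Zf_nonneg a d)
          rw [ArithmeticFunction.natCoe_apply]; positivity
        have h2 : ∑ x ∈ ({(1, p ^ v), (p ^ v, 1)} : Finset (ℕ × ℕ)),
            Zf a x.1 * ((ζ : ArithmeticFunction ℝ) x.2) ≤ Zf (a + 1) (p ^ v) := by
          rw [hstep]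
          apply Finset.sum_le_sum_of_subset_of_nonneg hsub
          intro x hx _; exact hnn x hx
        rw [Finset.sum_pair hne] at h2
        have hz1 : ((ζ : ArithmeticFunction ℝ) (p ^ v)) = 1 := by
          simp [ArithmeticFunction.natCoe_apply, ArithmeticFunction.zeta_apply,
            pow_ne_zero v hp.ne_zero, hp.ne_zero]
        have hz2 : ((ζ : ArithmeticFunction ℝ) 1) = 1 := by
          simp [ArithmeticFunction.natCoe_apply]
        rw [Zf_one, hz1, hz2] at h2
        have := ih ha'
        push_cast
        nlinarith [this, Zf_nonneg a (p^v)]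

/-- Convolution sums over `Icc 1 Q` are bounded by products of sums. -/
lemma conv_sum_le (f g : ℕ → ℝ) (hf : ∀ n, 0 ≤ f n) (hg : ∀ n, 0 ≤ g n) (Q : ℕ) :
    ∑ q ∈ Finset.Icc 1 Q, ∑ x ∈ q.divisorsAntidiagonal, f x.1 * g x.2 ≤
      (∑ d ∈ Finset.Icc 1 Q, f d) * (∑ m ∈ Finset.Icc 1 Q, g m) := by
  classical
  rw [Finset.sum_mul_sum]
  rw [Finset.sum_sigma' (Finset.Icc 1 Q) (fun q => q.divisorsAntidiagonal)
    (fun _ x => f x.1 * g x.2)]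
  -- sum over sigma set; map to pairs
  have hinj : Set.InjOn (fun x : Σ _ : ℕ, ℕ × ℕ => x.2)
      ((Finset.Icc 1 Q).sigma (fun q => q.divisorsAntidiagonal)) := by
    rintro ⟨q, d, m⟩ h1 ⟨q', d', m'⟩ h2 h
    simp only [Finset.mem_coe, Finset.mem_sigma, Nat.mem_divisorsAntidiagonal] at h1 h2
    have h' : (d, m) = (d', m') := h
    cases h'
    have : q = q' := by rw [← h1.2.1, ← h2.2.1]
    subst this
    rfl
  have himg := Finset.sum_image (s := (Finset.Icc 1 Q).sigma (fun q => q.divisorsAntidiagonal))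
    (f := fun y : ℕ × ℕ => f y.1 * g y.2) (g := fun x => x.2)
    (fun x hx y hy hxy => hinj (Finset.mem_coe.mpr hx) (Finset.mem_coe.mpr hy) hxy)
  rw [← himg, ← Finset.sum_product']
  apply Finset.sum_le_sum_of_subset_of_nonneg
  · intro x hx
    simp only [Finset.mem_image] at hx
    obtain ⟨⟨q, d, m⟩, hmem, rfl⟩ := hx
    simp only [Finset.mem_sigma, Nat.mem_divisorsAntidiagonal, Finset.mem_Icc] at hmem ⊢
    obtain ⟨⟨hq1, hq2⟩, hdm, hq0⟩ := hmem
    have hd : d ∣ q := ⟨m, hdm.symm⟩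
    have hm : m ∣ q := ⟨d, by rw [mul_comm]; exact hdm.symm⟩
    have hqpos : 0 < q := hq1
    refine Finset.mem_product.mpr ⟨?_, ?_⟩ <;> simp only [Finset.mem_Icc]
    · exact ⟨Nat.pos_of_dvd_of_pos hd hqpos, le_trans (Nat.le_of_dvd hqpos hd) hq2⟩
    · exact ⟨Nat.pos_of_dvd_of_pos hm hqpos, le_trans (Nat.le_of_dvd hqpos hm) hq2⟩
  · intro x _ _
    exact mul_nonneg (hf x.1) (hg x.2)

lemma Zf_sum_le (a Q : ℕ) (hQ : 1 ≤ Q) :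
    ∑ m ∈ Finset.Icc 1 Q, Zf a m / m ≤ (∑ n ∈ Finset.Icc 1 Q, 1/(n:ℝ)) ^ a := by
  induction a with
  | zero =>
      rw [pow_zero]
      have : ∀ m ∈ Finset.Icc 1 Q, Zf 0 m / (m:ℝ) = if m = 1 then 1 else 0 := by
        intro m hm
        rw [Zf_def, pow_zero]
        rcases eq_or_ne m 1 with rfl | hm1
        · simp
        · simp [ArithmeticFunction.one_apply, hm1]
      rw [Finset.sum_congr rfl this]
      have h1 : (∑ x ∈ Finset.Icc 1 Q, if x = 1 then (1:ℝ) else 0) = 1 := by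
        rw [Finset.sum_ite_eq' (Finset.Icc 1 Q) 1 (fun _ => (1:ℝ))]
        simp [hQ]
      rw [h1]
  | succ a ih =>
      have key : ∀ q ∈ Finset.Icc 1 Q, Zf (a+1) q / (q:ℝ) =
          ∑ x ∈ q.divisorsAntidiagonal,
            (Zf a x.1 / x.1) * (((ζ : ArithmeticFunction ℝ) x.2) / x.2) := by
        intro q hq
        have : Zf (a+1) q = ∑ x ∈ q.divisorsAntidiagonal,
            Zf a x.1 * ((ζ : ArithmeticFunction ℝ) x.2) := by
          rw [Zf_def, pow_succ, ← Zf_def, ArithmeticFunction.mul_apply]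
        rw [this, Finset.sum_div]
        apply Finset.sum_congr rfl
        rintro ⟨d, m⟩ hx
        obtain ⟨hdm, hq0⟩ := Nat.mem_divisorsAntidiagonal.mp hx
        have hd0 : d ≠ 0 := by rintro rfl; simp at hdm; exact hq0 hdm.symm
        have hm0 : m ≠ 0 := by rintro rfl; simp at hdm; exact hq0 hdm.symm
        have hdr : (d:ℝ) ≠ 0 := Nat.cast_ne_zero.mpr hd0
        have hmr : (m:ℝ) ≠ 0 := Nat.cast_ne_zero.mpr hm0
        have : (q:ℝ) = (d:ℝ) * m := by exact_mod_cast hdm.symm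
        rw [this]
        field_simp
      rw [Finset.sum_congr rfl key]
      have h1 : ∀ n, 0 ≤ Zf a n / n := fun n => div_nonneg (Zf_nonneg a n) (Nat.cast_nonneg n)
      have h2 : ∀ n : ℕ, 0 ≤ ((ζ : ArithmeticFunction ℝ) n) / n := by
        intro n
        apply div_nonneg _ (Nat.cast_nonneg n)
        rw [ArithmeticFunction.natCoe_apply]
        positivity
      calc ∑ q ∈ Finset.Icc 1 Q, ∑ x ∈ q.divisorsAntidiagonal,
            (Zf a x.1 / x.1) * (((ζ : ArithmeticFunction ℝ) x.2) / x.2)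
          ≤ (∑ d ∈ Finset.Icc 1 Q, Zf a d / d) *
            (∑ m ∈ Finset.Icc 1 Q, ((ζ : ArithmeticFunction ℝ) m) / m) :=
            conv_sum_le _ _ h1 h2 Q
        _ ≤ (∑ n ∈ Finset.Icc 1 Q, 1/(n:ℝ)) ^ a * (∑ n ∈ Finset.Icc 1 Q, 1/(n:ℝ)) := by
            apply mul_le_mul ih (le_of_eq ?_) ?_ (by positivity)
            · apply Finset.sum_congr rfl
              intro m hm
              have hm0 : m ≠ 0 := by
                have := (Finset.mem_Icc.mp hm).1; omega
              simp [ArithmeticFunction.natCoe_apply, ArithmeticFunction.zeta_apply, hm0]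
            · exact Finset.sum_nonneg fun m _ => h2 m
        _ = (∑ n ∈ Finset.Icc 1 Q, 1/(n:ℝ)) ^ (a+1) := by rw [pow_succ]

lemma sum_inv_sq_le (N : ℕ) : ∑ j ∈ Finset.Icc 1 N, 1/((j:ℝ))^2 ≤ 2 := by
  rcases Nat.eq_zero_or_pos N with rfl | hN
  · simp
  have key : ∀ N : ℕ, 1 ≤ N → ∑ j ∈ Finset.Icc 1 N, 1/((j:ℝ))^2 ≤ 2 - 1/(N:ℝ) := by
    intro N hN
    induction N with
    | zero => omega
    | succ n ih =>
        rcases Nat.eq_zero_or_pos n with rfl | hn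
        · rw [Finset.Icc_self, Finset.sum_singleton]
          norm_num
        rw [Finset.sum_Icc_succ_top (by omega)]
        have h2 : (1:ℝ)/((n+1:ℕ):ℝ)^2 ≤ 1/(n:ℝ) - 1/((n:ℝ)+1) := by
          have hn' : (1:ℝ) ≤ (n:ℝ) := by exact_mod_cast hn
          rw [div_sub_div _ _ (by linarith) (by linarith)]
          push_cast
          rw [div_le_div_iff₀ (by positivity) (by positivity)]
          ring_nf
          nlinarith
        have := ih hn
        push_cast at h2 ⊢
        linarith
  have hk := key N hN
  have h0 : (0:ℝ) < 1/(N:ℝ) := by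
    have : (0:ℝ) < (N:ℝ) := by exact_mod_cast hN
    positivity
  linarith [hk]

lemma prime_sum_le (N : ℕ) : ∑ p ∈ N.primesBelow, 1/((p:ℝ)-1)^2 ≤ 2 := by
  have hcast : ∀ p ∈ N.primesBelow, 1/((p:ℝ)-1)^2 = 1/(((p-1 : ℕ):ℝ))^2 := by
    intro p hp
    have h2 : 2 ≤ p := (Nat.prime_of_mem_primesBelow hp).two_le
    have : ((p-1 : ℕ):ℝ) = (p:ℝ) - 1 := by
      push_cast [Nat.cast_sub (by omega : 1 ≤ p)]
      ring
    rw [this]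
  rw [Finset.sum_congr rfl hcast]
  have hinj : ∀ x ∈ N.primesBelow, ∀ y ∈ N.primesBelow, x - 1 = y - 1 → x = y := by
    intro x hx y hy h
    have hx2 := (Nat.prime_of_mem_primesBelow hx).two_le
    have hy2 := (Nat.prime_of_mem_primesBelow hy).two_le
    omega
  have himg := Finset.sum_image (s := N.primesBelow)
    (f := fun j : ℕ => 1/((j:ℝ))^2) (g := fun p : ℕ => p - 1) hinj
  rw [← himg]
  have hsub : N.primesBelow.image (fun p : ℕ => p - 1) ⊆ Finset.Icc 1 N := by
    intro j hj
    simp only [Finset.mem_image] at hj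
    obtain ⟨p, hp, rfl⟩ := hj
    have h2 := (Nat.prime_of_mem_primesBelow hp).two_le
    have hlt := Nat.lt_of_mem_primesBelow hp
    simp only [Finset.mem_Icc]
    omega
  refine le_trans (Finset.sum_le_sum_of_subset_of_nonneg hsub ?_) (sum_inv_sq_le N)
  intro j _ _
  positivity

lemma epsP_le {C : ℝ} (hC : 0 ≤ C) {p : ℕ} (hp : 2 ≤ p) :
    epsP C p ≤ C * Real.exp C / ((p:ℝ)-1) := by
  set x : ℝ := 1/((p:ℝ)-1) with hx
  have hp2 : (2:ℝ) ≤ (p:ℝ) := by exact_mod_cast hp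
  have hxpos : 0 < x := by
    rw [hx]
    apply div_pos one_pos
    linarith
  have hx1 : x ≤ 1 := by
    rw [hx, div_le_one (by linarith)]; linarith
  have h1 : (1 + x)^C ≤ Real.exp (C * x) := by
    rw [Real.rpow_def_of_pos (by linarith)]
    apply Real.exp_le_exp.mpr
    have := Real.log_le_sub_one_of_pos (show (0:ℝ) < 1 + x by linarith)
    have h' : Real.log (1 + x) ≤ x := by linarith
    nlinarith [Real.log_nonneg (show (1:ℝ) ≤ 1 + x by linarith)]
  have h2 : Real.exp (C * x) - 1 ≤ (C * x) * Real.exp (C * x) := by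
    have := Real.add_one_le_exp (-(C * x))
    have hepos : (0:ℝ) < Real.exp (C * x) := Real.exp_pos _
    have : (1 - C * x) * Real.exp (C * x) ≤ 1 := by
      have hh : 1 - C * x ≤ Real.exp (-(C*x)) := by linarith
      calc (1 - C * x) * Real.exp (C * x) ≤ Real.exp (-(C*x)) * Real.exp (C*x) :=
            mul_le_mul_of_nonneg_right hh (le_of_lt hepos)
        _ = 1 := by rw [← Real.exp_add]; simp
    nlinarith
  have h3 : Real.exp (C * x) ≤ Real.exp C := by
    apply Real.exp_le_exp.mpr
    nlinarith
  have : epsP C p ≤ (C * x) * Real.exp C := by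
    rw [epsP, ← hx]
    have hnn : 0 ≤ C * x := by positivity
    nlinarith [Real.exp_pos (C*x)]
  calc epsP C p ≤ (C * x) * Real.exp C := this
    _ = C * Real.exp C / ((p:ℝ)-1) := by rw [hx]; ring

lemma hFun_sum_le (a : ℕ) {C : ℝ} (hC : 0 < C) (Q : ℕ) :
    ∑ d ∈ Finset.Icc 1 Q, hFun a C d / d ≤ Real.exp (2 * a * (C * Real.exp C)) := by
  classical
  set f : ℕ → ℝ := fun d => hFun a C d / d with hf
  have hf1 : f 1 = 1 := by simp [hf, (hFun_isMult (a := a) (C := C)).1]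
  have hf0 : f 0 = 0 := by simp [hf]
  have hmul : ∀ {m n : ℕ}, Nat.Coprime m n → f (m * n) = f m * f n := by
    intro m n hmn
    rcases eq_or_ne m 0 with rfl | hm
    · have : n = 1 := by simpa using hmn
      subst this; simp [hf1, hf0]
    rcases eq_or_ne n 0 with rfl | hn
    · have : m = 1 := (Nat.coprime_zero_right m).mp hmn
      subst this; simp [hf1, hf0]
    have := (hFun_isMult (a := a) (C := C)).2 hmn
    simp only [hf]
    rw [this]
    have hmr : (m:ℝ) ≠ 0 := Nat.cast_ne_zero.mpr hm
    have hnr : (n:ℝ) ≠ 0 := Nat.cast_ne_zero.mpr hn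
    push_cast
    field_simp
  have hfnonneg : ∀ n, 0 ≤ f n := fun n =>
    div_nonneg (hFun_nonneg hC.le n) (Nat.cast_nonneg n)
  -- per-prime summability
  have hsump : ∀ {p : ℕ}, p.Prime → Summable (fun e : ℕ => ‖f (p ^ e)‖) := by
    intro p hp
    have hp1 : (1:ℝ) < p := by exact_mod_cast hp.one_lt
    have hplt : (1:ℝ)/p < 1 := by
      rw [div_lt_one (by linarith)]; linarith
    have hpnn : (0:ℝ) ≤ 1/p := by positivity
    have hgeo : Summable (fun e : ℕ => (1 + (a:ℝ) * epsP C p) * (1/(p:ℝ))^e) :=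
      (summable_geometric_of_lt_one hpnn hplt).mul_left _
    refine Summable.of_nonneg_of_le (fun e => norm_nonneg _) ?_ hgeo
    · intro e
      have heps := epsP_nonneg hC.le hp.two_le
      rcases Nat.eq_zero_or_pos e with rfl | he
      · have h1 : (hFun a C) 1 = 1 := (hFun_isMult (a := a) (C := C)).1
        simp only [hf, pow_zero, Nat.cast_one, div_one, h1, norm_one]
        nlinarith
      · rw [Real.norm_of_nonneg (hfnonneg _), hf]
        simp only
        rw [hFun_prime_pow hp he]
        push_cast
        rw [one_div, inv_pow, div_eq_mul_inv]
        have : (0:ℝ) ≤ ((p:ℝ)^e)⁻¹ := by positivity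
        nlinarith
  obtain ⟨hsummable, hhassum⟩ :=
    EulerProduct.summable_and_hasSum_smoothNumbers_prod_primesBelow_tsum hf1 hmul hsump (Q+1)
  -- the finite sum is at most the tsum over smooth numbers
  have hstep1 : ∑ d ∈ Finset.Icc 1 Q, f d ≤
      ∏ p ∈ (Q+1).primesBelow, ∑' e : ℕ, f (p ^ e) := by
    have hmemsm : ∀ d ∈ Finset.Icc 1 Q, d ∈ (Q+1).smoothNumbers := by
      intro d hd
      obtain ⟨h1, h2⟩ := Finset.mem_Icc.mp hd
      exact Nat.mem_smoothNumbers_of_lt h1 (by omega)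
    set s : Finset ((Q+1).smoothNumbers) :=
      (Finset.Icc 1 Q).subtype (· ∈ (Q+1).smoothNumbers) with hs
    have hsum_eq : ∑ x ∈ s, f x = ∑ d ∈ Finset.Icc 1 Q, f d := by
      rw [hs, Finset.sum_subtype_eq_sum_filter]
      apply Finset.sum_congr _ (fun x _ => rfl)
      rw [Finset.filter_true_of_mem hmemsm]
    rw [← hsum_eq]
    exact sum_le_hasSum s (fun i _ => hfnonneg i) hhassum
  refine le_trans hstep1 ?_
  -- bound each Euler factor
  have hfactor : ∀ p ∈ (Q+1).primesBelow,
      ∑' e : ℕ, f (p ^ e) ≤ Real.exp ((a:ℝ) * (C * Real.exp C) / ((p:ℝ)-1)^2) := by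
    intro p hp
    have hpp := Nat.prime_of_mem_primesBelow hp
    have hp1 : (1:ℝ) < p := by exact_mod_cast hpp.one_lt
    have hp2 : (2:ℝ) ≤ p := by exact_mod_cast hpp.two_le
    have hplt : (1:ℝ)/p < 1 := by rw [div_lt_one (by linarith)]; linarith
    have hpnn : (0:ℝ) ≤ 1/p := by positivity
    have heps := epsP_nonneg hC.le hpp.two_le
    have hsumf : Summable (fun e : ℕ => f (p ^ e)) := (hsump hpp).of_norm
    have heval : ∑' e : ℕ, f (p ^ e) = 1 + (a:ℝ) * epsP C p * (1/((p:ℝ)-1)) := by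
      rw [Summable.tsum_eq_zero_add hsumf]
      simp only [pow_zero, hf1]
      congr 1
      have : ∀ e : ℕ, f (p ^ (e+1)) = ((a:ℝ) * epsP C p * (1/(p:ℝ))) * (1/(p:ℝ))^e := by
        intro e
        simp only [hf]
        rw [hFun_prime_pow hpp (by omega)]
        have hpne : (p:ℝ) ≠ 0 := by linarith
        push_cast
        rw [one_div, inv_pow, pow_succ]
        field_simp
      rw [tsum_congr this, tsum_mul_left, tsum_geometric_of_lt_one hpnn hplt]
      have hne1 : (p:ℝ) - 1 ≠ 0 := by linarith
      have hne2 : (p:ℝ) ≠ 0 := by linarith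
      field_simp
    rw [heval]
    have hkey : (a:ℝ) * epsP C p * (1/((p:ℝ)-1)) ≤ (a:ℝ) * (C * Real.exp C) / ((p:ℝ)-1)^2 := by
      have hle := epsP_le hC.le hpp.two_le
      have hpos : (0:ℝ) < (p:ℝ) - 1 := by linarith
      calc (a:ℝ) * epsP C p * (1/((p:ℝ)-1)) = ((a:ℝ)/((p:ℝ)-1)) * epsP C p := by ring
        _ ≤ ((a:ℝ)/((p:ℝ)-1)) * (C * Real.exp C / ((p:ℝ)-1)) :=
            mul_le_mul_of_nonneg_left hle (by positivity)
        _ = (a:ℝ) * (C * Real.exp C) / ((p:ℝ)-1)^2 := by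
            field_simp
    refine le_trans (le_trans (by linarith [hkey]) (Real.add_one_le_exp _)) (le_refl _)
  calc ∏ p ∈ (Q+1).primesBelow, ∑' e : ℕ, f (p ^ e)
      ≤ ∏ p ∈ (Q+1).primesBelow, Real.exp ((a:ℝ) * (C * Real.exp C) / ((p:ℝ)-1)^2) := by
        apply Finset.prod_le_prod _ hfactor
        intro p hp
        have hpp := Nat.prime_of_mem_primesBelow hp
        have hsumf : Summable (fun e : ℕ => f (p ^ e)) := (hsump hpp).of_norm
        exact tsum_nonneg (fun e => hfnonneg _)
    _ = Real.exp (∑ p ∈ (Q+1).primesBelow, (a:ℝ) * (C * Real.exp C) / ((p:ℝ)-1)^2) :=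
        (Real.exp_sum _ _).symm
    _ ≤ Real.exp (2 * a * (C * Real.exp C)) := by
        apply Real.exp_le_exp.mpr
        have : ∑ p ∈ (Q+1).primesBelow, (a:ℝ) * (C * Real.exp C) / ((p:ℝ)-1)^2 =
            (a:ℝ) * (C * Real.exp C) * ∑ p ∈ (Q+1).primesBelow, 1/((p:ℝ)-1)^2 := by
          rw [Finset.mul_sum]
          apply Finset.sum_congr rfl
          intro p _
          ring
        rw [this]
        have h2 := prime_sum_le (Q+1)
        have hnn : (0:ℝ) ≤ (a:ℝ) * (C * Real.exp C) := by positivity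
        nlinarith

noncomputable def Rf (a : ℕ) (C : ℝ) : ArithmeticFunction ℝ := hFun a C * Zf a

lemma Rf_isMult {a : ℕ} {C : ℝ} : (Rf a C).IsMultiplicative :=
  (hFun_isMult (a := a) (C := C)).mul (Zf_isMult a)

lemma Rf_nonneg {a : ℕ} {C : ℝ} (hC : 0 ≤ C) (n : ℕ) : 0 ≤ Rf a C n := by
  rw [Rf, ArithmeticFunction.mul_apply]
  exact Finset.sum_nonneg fun x _ => mul_nonneg (hFun_nonneg hC _) (Zf_nonneg a _)

lemma Rf_apply {a : ℕ} {C : ℝ} {n : ℕ} :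
    Rf a C n = ∑ x ∈ n.divisorsAntidiagonal, hFun a C x.1 * Zf a x.2 := by
  rw [Rf, ArithmeticFunction.mul_apply]

lemma Rf_prime_pow_ge {a : ℕ} (ha : 1 ≤ a) {C : ℝ} (hC : 0 ≤ C) {p v : ℕ}
    (hp : p.Prime) (hv : 1 ≤ v) :
    (a:ℝ) * (1 + epsP C p) ≤ Rf a C (p ^ v) := by
  have hpv0 : p ^ v ≠ 0 := pow_ne_zero v hp.ne_zero
  have hpv1 : p ^ v ≠ 1 := Nat.ne_of_gt (Nat.one_lt_pow (by omega) hp.one_lt)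
  have hsub : ({(1, p ^ v), (p ^ v, 1)} : Finset (ℕ × ℕ)) ⊆
      (p ^ v).divisorsAntidiagonal := by
    intro x hx
    simp only [Finset.mem_insert, Finset.mem_singleton] at hx
    rcases hx with rfl | rfl <;> simp [Nat.mem_divisorsAntidiagonal, hpv0, hp.ne_zero]
  have hne : ((1, p ^ v) : ℕ × ℕ) ≠ (p ^ v, 1) := by
    intro h
    exact hpv1 (Prod.ext_iff.mp h).1.symm
  have h2 : ∑ x ∈ ({(1, p ^ v), (p ^ v, 1)} : Finset (ℕ × ℕ)),
      hFun a C x.1 * Zf a x.2 ≤ Rf a C (p ^ v) := by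
    rw [Rf_apply]
    apply Finset.sum_le_sum_of_subset_of_nonneg hsub
    intro x hx _
    exact mul_nonneg (hFun_nonneg hC _) (Zf_nonneg a _)
  rw [Finset.sum_pair hne, (hFun_isMult (a := a) (C := C)).1, one_mul,
    hFun_prime_pow hp hv, Zf_one, mul_one] at h2
  have h3 := Zf_ge_prime_pow ha hp hv
  nlinarith [epsP_nonneg hC hp.two_le]

lemma b_le_Rf {a : ℕ} (ha : 1 ≤ a) {C : ℝ} (hC : 0 ≤ C) (b : ℕ → ℝ)
    (hb0 : ∀ n, 0 ≤ b n) (hb1 : b 1 = 1)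
    (hbmul : ∀ m n : ℕ, Nat.Coprime m n → b (m * n) = b m * b n)
    (hbp : ∀ p v : ℕ, p.Prime → 1 ≤ v → b (p ^ v) ≤ (a:ℝ) * (1 + 1 / ((p:ℝ) - 1)) ^ C)
    {q : ℕ} (hq : q ≠ 0) : b q ≤ Rf a C q := by
  rw [Nat.multiplicative_factorization b (fun x y h => hbmul x y h) hb1 hq,
    (Rf_isMult (a := a) (C := C)).multiplicative_factorization _ hq]
  rw [Finsupp.prod, Finsupp.prod]
  apply Finset.prod_le_prod
  · intro p _
    exact hb0 _
  · intro p hpmem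
    have hp : p.Prime := Nat.prime_of_mem_primeFactors (by
      rwa [Nat.support_factorization] at hpmem)
    have hv : 1 ≤ q.factorization p := by
      have := Finsupp.mem_support_iff.mp hpmem
      omega
    refine le_trans (hbp p _ hp hv) ?_
    have : (a:ℝ) * (1 + 1/((p:ℝ)-1))^C = (a:ℝ) * (1 + epsP C p) := by
      rw [epsP]; ring
    rw [this]
    exact Rf_prime_pow_ge ha hC hp hv

/-- If `b : ℕ → [0,∞)` is multiplicative and satisfies
`b(p^v) ≤ (k−1)²·(1 + 1/(p−1))^C` at all prime powers, then
`Σ_{q=1}^{Q} b(q)/q ≪_{k,C} (log Q)^{(k−1)²}`. -/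
theorem stmt_16 (k : ℕ) (hk : 2 ≤ k) (C : ℝ) (hC : 0 < C) :
    ∃ K > 0, ∀ b : ℕ → ℝ,
      (∀ n, 0 ≤ b n) → b 1 = 1 →
      (∀ m n : ℕ, Nat.Coprime m n → b (m * n) = b m * b n) →
      (∀ p v : ℕ, p.Prime → 1 ≤ v →
        b (p ^ v) ≤ ((k : ℝ) - 1) ^ 2 * (1 + 1 / ((p : ℝ) - 1)) ^ C) →
      ∀ Q : ℕ, 2 ≤ Q →
        ∑ q ∈ Finset.Icc 1 Q, b q / q ≤ K * Real.log Q ^ ((k - 1) ^ 2 : ℕ) := by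
  set a : ℕ := (k - 1) ^ 2 with hadef
  have ha : 1 ≤ a := by
    have : 1 ≤ k - 1 := by omega
    exact Nat.one_le_pow _ _ (by omega) |>.trans (Nat.pow_le_pow_left this 2) |> id
  have hacast : ((k:ℝ) - 1)^2 = (a:ℝ) := by
    rw [hadef]
    push_cast [Nat.cast_sub (by omega : 1 ≤ k)]
    ring
  refine ⟨Real.exp (2 * a * (C * Real.exp C)) * 3 ^ a, by positivity, ?_⟩
  intro b hb0 hb1 hbmul hbp Q hQ
  have hQ1 : 1 ≤ Q := by omega
  -- pointwise comparison
  have hbp' : ∀ p v : ℕ, p.Prime → 1 ≤ v →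
      b (p ^ v) ≤ (a:ℝ) * (1 + 1 / ((p:ℝ) - 1)) ^ C := by
    intro p v hp hv
    rw [← hacast]
    exact hbp p v hp hv
  have step1 : ∑ q ∈ Finset.Icc 1 Q, b q / q ≤ ∑ q ∈ Finset.Icc 1 Q, Rf a C q / q := by
    apply Finset.sum_le_sum
    intro q hq
    have hq0 : q ≠ 0 := by
      have := (Finset.mem_Icc.mp hq).1; omega
    have hqr : (0:ℝ) < q := by
      have : 1 ≤ q := by omega
      exact_mod_cast this
    exact (div_le_div_iff_of_pos_right hqr).mpr (b_le_Rf ha hC.le b hb0 hb1 hbmul hbp' hq0)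
  -- convolution expansion
  have key : ∀ q ∈ Finset.Icc 1 Q, Rf a C q / (q:ℝ) =
      ∑ x ∈ q.divisorsAntidiagonal, (hFun a C x.1 / x.1) * (Zf a x.2 / x.2) := by
    intro q hq
    rw [Rf_apply, Finset.sum_div]
    apply Finset.sum_congr rfl
    rintro ⟨d, m⟩ hx
    obtain ⟨hdm, hq0⟩ := Nat.mem_divisorsAntidiagonal.mp hx
    have hd0 : d ≠ 0 := by rintro rfl; simp at hdm; exact hq0 hdm.symm
    have hm0 : m ≠ 0 := by rintro rfl; simp at hdm; exact hq0 hdm.symm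
    have hdr : (d:ℝ) ≠ 0 := Nat.cast_ne_zero.mpr hd0
    have hmr : (m:ℝ) ≠ 0 := Nat.cast_ne_zero.mpr hm0
    have : (q:ℝ) = (d:ℝ) * m := by exact_mod_cast hdm.symm
    rw [this]
    field_simp
  have step2 : ∑ q ∈ Finset.Icc 1 Q, Rf a C q / q ≤
      (∑ d ∈ Finset.Icc 1 Q, hFun a C d / d) * (∑ m ∈ Finset.Icc 1 Q, Zf a m / m) := by
    rw [Finset.sum_congr rfl key]
    exact conv_sum_le _ _
      (fun n => div_nonneg (hFun_nonneg hC.le n) (Nat.cast_nonneg n))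
      (fun n => div_nonneg (Zf_nonneg a n) (Nat.cast_nonneg n)) Q
  -- harmonic bound
  have hlog2 : (0.6931471803 : ℝ) < Real.log 2 := Real.log_two_gt_d9
  have hlogQ : Real.log 2 ≤ Real.log Q := by
    apply Real.log_le_log (by norm_num)
    exact_mod_cast hQ
  have hlogQpos : (0:ℝ) < Real.log Q := by linarith
  have hH : ∑ n ∈ Finset.Icc 1 Q, 1/(n:ℝ) ≤ 3 * Real.log Q := by
    have h1 : ∑ n ∈ Finset.Icc 1 Q, 1/(n:ℝ) = ((harmonic Q : ℚ) : ℝ) := by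
      rw [harmonic_eq_sum_Icc]
      push_cast
      simp [one_div]
    rw [h1]
    have h2 := harmonic_le_one_add_log Q
    have : (1:ℝ) ≤ 2 * Real.log Q := by linarith
    linarith
  have hHnn : (0:ℝ) ≤ ∑ n ∈ Finset.Icc 1 Q, 1/(n:ℝ) :=
    Finset.sum_nonneg fun n _ => by positivity
  have step3 : ∑ m ∈ Finset.Icc 1 Q, Zf a m / m ≤ (3 * Real.log Q) ^ a :=
    le_trans (Zf_sum_le a Q hQ1) (pow_le_pow_left₀ hHnn hH a)
  have hZnn : (0:ℝ) ≤ ∑ m ∈ Finset.Icc 1 Q, Zf a m / m :=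
    Finset.sum_nonneg fun n _ => div_nonneg (Zf_nonneg a n) (Nat.cast_nonneg n)
  have hhnn : (0:ℝ) ≤ ∑ d ∈ Finset.Icc 1 Q, hFun a C d / d :=
    Finset.sum_nonneg fun n _ => div_nonneg (hFun_nonneg hC.le n) (Nat.cast_nonneg n)
  calc ∑ q ∈ Finset.Icc 1 Q, b q / q
      ≤ ∑ q ∈ Finset.Icc 1 Q, Rf a C q / q := step1
    _ ≤ (∑ d ∈ Finset.Icc 1 Q, hFun a C d / d) * (∑ m ∈ Finset.Icc 1 Q, Zf a m / m) := step2
    _ ≤ Real.exp (2 * a * (C * Real.exp C)) * (3 * Real.log Q) ^ a := by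
        apply mul_le_mul (hFun_sum_le a hC Q) step3 hZnn (Real.exp_pos _).le
    _ = Real.exp (2 * a * (C * Real.exp C)) * 3 ^ a * Real.log Q ^ a := by
        rw [mul_pow]; ring
    _ = Real.exp (2 * a * (C * Real.exp C)) * 3 ^ a * Real.log Q ^ ((k-1)^2 : ℕ) := by
        rw [hadef]
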